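/- In the setting of the previous statement (finite filtered space, stopper minimizing, nature maximizing via $\mathcal{E}$), the stopping time $\tau^* = \inf\{t \ge 0 : f_t = X_t\}$ is optimal: $X_0 = \mathcal{E}[f_{\tau^*}] = \inf_{\tau \in \mathcal{T}} \mathcal{E}[f_\tau]$. -/

import Mathlib

/-! Adverse optimal stopping for nonlinear expectations on the product path space
`Ω = Ω₁^ℕ` (coordinates `0, …, T-1` are observed at times `1, …, T`), with `Ω₁` finite.
`R t ω` is the set of one-step transition laws available at time `t` in state `ω`;
the pasting-stable family `𝔯_t(ω)` is encoded by the recursively defined nonlinear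
conditional expectation `NE`. -/

/-- The nonlinear conditional expectation `𝓔_t[ξ](ω) = sup_{P ∈ 𝔯_t(ω)} E_P[ξ(ω^t, ·)]`
obtained by backward recursion over the one-step kernel sets `R`. -/
noncomputable def NE {Ω₁ : Type*} [Fintype Ω₁] (T : ℕ)
    (R : ℕ → (ℕ → Ω₁) → Set (Ω₁ → ℝ)) (t : ℕ) (ξ : (ℕ → Ω₁) → ℝ) : (ℕ → Ω₁) → ℝ :=
  if h : T ≤ t then ξ
  else fun ω =>
    sSup ((fun P : Ω₁ → ℝ =>
      ∑ x : Ω₁, P x * NE T R (t + 1) ξ (Function.update ω t x)) '' R t ω)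
termination_by T - t
decreasing_by omega

/-- Stopping times of the raw filtration with values in `[t, T]`. -/
def IsStopAt {Ω₁ : Type*} (T t : ℕ) (τ : (ℕ → Ω₁) → ℕ) : Prop :=
  (∀ ω, t ≤ τ ω ∧ τ ω ≤ T) ∧
  ∀ s : ℕ, ∀ ω ω' : ℕ → Ω₁, (∀ j, j < s → ω j = ω' j) → τ ω = s → τ ω' = s

/-- An adapted payoff process: `f t` depends only on the first `t` coordinates. -/
def AdaptedProc {Ω₁ : Type*} (T : ℕ) (f : ℕ → (ℕ → Ω₁) → ℝ) : Prop :=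
  ∀ t ≤ T, ∀ ω ω' : ℕ → Ω₁, (∀ j, j < t → ω j = ω' j) → f t ω = f t ω'

/-- The one-step kernel sets are nonempty convex-free families of probability vectors,
depending only on the past. -/
def GoodKernels {Ω₁ : Type*} [Fintype Ω₁] (T : ℕ)
    (R : ℕ → (ℕ → Ω₁) → Set (Ω₁ → ℝ)) : Prop :=
  ∀ t, t < T → ∀ ω : ℕ → Ω₁,
    (R t ω).Nonempty ∧
    (∀ P ∈ R t ω, (∀ x, 0 ≤ P x) ∧ ∑ x : Ω₁, P x = 1) ∧
    (∀ ω' : ℕ → Ω₁, (∀ j, j < t → ω j = ω' j) → R t ω = R t ω')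

/-- The upper value process `X t = inf_{τ ∈ 𝒯_t} 𝓔_t[f_τ]`. -/
noncomputable def upValue {Ω₁ : Type*} [Fintype Ω₁] (T : ℕ)
    (R : ℕ → (ℕ → Ω₁) → Set (Ω₁ → ℝ)) (f : ℕ → (ℕ → Ω₁) → ℝ) (t : ℕ) :
    (ℕ → Ω₁) → ℝ :=
  fun ω => ⨅ τ : {τ : (ℕ → Ω₁) → ℕ // IsStopAt T t τ},
    NE T R t (fun ω' => f (τ.1 ω') ω') ω
section proofs
variable {Ω₁ : Type*} [Fintype Ω₁]

lemma NE_of_le (T : ℕ) (R : ℕ → (ℕ → Ω₁) → Set (Ω₁ → ℝ)) (t : ℕ) (ht : T ≤ t)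
    (ξ : (ℕ → Ω₁) → ℝ) : NE T R t ξ = ξ := by
  rw [NE]; simp [ht]

lemma NE_of_lt (T : ℕ) (R : ℕ → (ℕ → Ω₁) → Set (Ω₁ → ℝ)) (t : ℕ) (ht : t < T)
    (ξ : (ℕ → Ω₁) → ℝ) (ω : ℕ → Ω₁) :
    NE T R t ξ ω = sSup ((fun P : Ω₁ → ℝ =>
      ∑ x : Ω₁, P x * NE T R (t + 1) ξ (Function.update ω t x)) '' R t ω) := by
  conv_lhs => rw [NE]
  simp [Nat.not_le.2 ht]

end proofs
lemma NE_congr {Ω₁ : Type*} [Fintype Ω₁] (T : ℕ) (R : ℕ → (ℕ → Ω₁) → Set (Ω₁ → ℝ))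
    (t : ℕ) (ξ ξ' : (ℕ → Ω₁) → ℝ) (ω : ℕ → Ω₁)
    (h : ∀ ω', (∀ j, j < t → ω' j = ω j) → ξ ω' = ξ' ω') :
    NE T R t ξ ω = NE T R t ξ' ω := by
  rcases le_or_gt T t with ht | ht
  · rw [NE_of_le _ _ _ ht, NE_of_le _ _ _ ht]; exact h ω (fun _ _ => rfl)
  · rw [NE_of_lt _ _ _ ht, NE_of_lt _ _ _ ht]
    congr 1
    apply Set.image_congr
    intro P _
    refine Finset.sum_congr rfl (fun x _ => ?_)
    congr 1
    refine NE_congr T R (t+1) ξ ξ' (Function.update ω t x) (fun ω' hω' => ?_)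
    refine h ω' (fun j hj => ?_)
    have := hω' j (by omega)
    rwa [Function.update_of_ne (by omega)] at this
termination_by T - t
decreasing_by omega

lemma NE_const {Ω₁ : Type*} [Fintype Ω₁] [Nonempty Ω₁] (T : ℕ)
    (R : ℕ → (ℕ → Ω₁) → Set (Ω₁ → ℝ)) (hR : GoodKernels T R)
    (t : ℕ) (ξ : (ℕ → Ω₁) → ℝ) (ω : ℕ → Ω₁) (c : ℝ)
    (h : ∀ ω', (∀ j, j < t → ω' j = ω j) → ξ ω' = c) :
    NE T R t ξ ω = c := by
  rcases le_or_gt T t with ht | ht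
  · rw [NE_of_le _ _ _ ht]; exact h ω (fun _ _ => rfl)
  · rw [NE_of_lt _ _ _ ht]
    have key : ∀ x : Ω₁, NE T R (t+1) ξ (Function.update ω t x) = c := by
      intro x
      refine NE_const T R hR (t+1) ξ _ c (fun ω' hω' => h ω' (fun j hj => ?_))
      have := hω' j (by omega)
      rwa [Function.update_of_ne (by omega)] at this
    have himg : (fun P : Ω₁ → ℝ =>
        ∑ x : Ω₁, P x * NE T R (t + 1) ξ (Function.update ω t x)) '' R t ω = {c} := by
      apply Set.eq_singleton_iff_nonempty_unique_mem.2
      refine ⟨(hR t ht ω).1.image _, ?_⟩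
      rintro y ⟨P, hP, rfl⟩
      simp only [key]
      rw [← Finset.sum_mul, ((hR t ht ω).2.1 P hP).2, one_mul]
    rw [himg, csSup_singleton]
termination_by T - t
decreasing_by omega

lemma sum_le_abs_sum {Ω₁ : Type*} [Fintype Ω₁] (T : ℕ)
    (R : ℕ → (ℕ → Ω₁) → Set (Ω₁ → ℝ)) (hR : GoodKernels T R) {t : ℕ} (ht : t < T)
    (ω : ℕ → Ω₁) (a : Ω₁ → ℝ) (P : Ω₁ → ℝ) (hP : P ∈ R t ω) :
    ∑ x : Ω₁, P x * a x ≤ ∑ x : Ω₁, |a x| := by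
  obtain ⟨hnn, hsum⟩ := (hR t ht ω).2.1 P hP
  have hP1 : ∀ x, P x ≤ 1 := fun x => by
    calc P x ≤ ∑ y : Ω₁, P y := Finset.single_le_sum (fun y _ => hnn y) (Finset.mem_univ x)
    _ = 1 := hsum
  refine Finset.sum_le_sum (fun x _ => ?_)
  calc P x * a x ≤ P x * |a x| := mul_le_mul_of_nonneg_left (le_abs_self _) (hnn x)
  _ ≤ 1 * |a x| := mul_le_mul_of_nonneg_right (hP1 x) (abs_nonneg _)
  _ = |a x| := one_mul _

lemma bddAbove_img {Ω₁ : Type*} [Fintype Ω₁] (T : ℕ)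
    (R : ℕ → (ℕ → Ω₁) → Set (Ω₁ → ℝ)) (hR : GoodKernels T R) {t : ℕ} (ht : t < T)
    (ω : ℕ → Ω₁) (a : Ω₁ → ℝ) :
    BddAbove ((fun P : Ω₁ → ℝ => ∑ x : Ω₁, P x * a x) '' R t ω) := by
  refine ⟨∑ x : Ω₁, |a x|, ?_⟩
  rintro y ⟨P, hP, rfl⟩
  exact sum_le_abs_sum T R hR ht ω a P hP

lemma NE_mono {Ω₁ : Type*} [Fintype Ω₁] (T : ℕ)
    (R : ℕ → (ℕ → Ω₁) → Set (Ω₁ → ℝ)) (hR : GoodKernels T R)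
    (t : ℕ) (ξ ξ' : (ℕ → Ω₁) → ℝ) (h : ∀ ω', ξ ω' ≤ ξ' ω') (ω : ℕ → Ω₁) :
    NE T R t ξ ω ≤ NE T R t ξ' ω := by
  rcases le_or_gt T t with ht | ht
  · rw [NE_of_le _ _ _ ht, NE_of_le _ _ _ ht]; exact h ω
  · rw [NE_of_lt _ _ _ ht, NE_of_lt _ _ _ ht]
    refine csSup_le ((hR t ht ω).1.image _) ?_
    rintro y ⟨P, hP, rfl⟩
    refine le_trans ?_ (le_csSup (bddAbove_img T R hR ht ω _) ⟨P, hP, rfl⟩)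
    refine Finset.sum_le_sum (fun x _ => ?_)
    exact mul_le_mul_of_nonneg_left (NE_mono T R hR (t+1) ξ ξ' h _)
      (((hR t ht ω).2.1 P hP).1 x)
termination_by T - t
decreasing_by omega

lemma NE_agree {Ω₁ : Type*} [Fintype Ω₁] (T : ℕ)
    (R : ℕ → (ℕ → Ω₁) → Set (Ω₁ → ℝ)) (hR : GoodKernels T R)
    (t : ℕ) (ξ : (ℕ → Ω₁) → ℝ)
    (hξ : ∀ ω ω' : ℕ → Ω₁, (∀ j, j < T → ω j = ω' j) → ξ ω = ξ ω')
    (ω ω' : ℕ → Ω₁) (hωω' : ∀ j, j < t → ω j = ω' j) :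
    NE T R t ξ ω = NE T R t ξ ω' := by
  rcases le_or_gt T t with ht | ht
  · rw [NE_of_le _ _ _ ht]; exact hξ ω ω' (fun j hj => hωω' j (by omega))
  · rw [NE_of_lt _ _ _ ht, NE_of_lt _ _ _ ht]
    rw [← (hR t ht ω).2.2 ω' hωω']
    congr 1
    apply Set.image_congr
    intro P _
    refine Finset.sum_congr rfl (fun x _ => ?_)
    congr 1
    refine NE_agree T R hR (t+1) ξ hξ _ _ (fun j hj => ?_)
    rcases eq_or_ne j t with rfl | hne
    · rw [Function.update_self, Function.update_self]
    · rw [Function.update_of_ne hne, Function.update_of_ne hne]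
      exact hωω' j (by omega)
termination_by T - t
decreasing_by omega
set_option linter.unusedSectionVars false

section valueproc

variable {Ω₁ : Type*} [Fintype Ω₁] [Nonempty Ω₁] {T : ℕ}
  {R : ℕ → (ℕ → Ω₁) → Set (Ω₁ → ℝ)} {f : ℕ → (ℕ → Ω₁) → ℝ}

lemma stop_const {t : ℕ} (s : ℕ) (hts : t ≤ s) (hsT : s ≤ T) :
    IsStopAt T t (fun _ : ℕ → Ω₁ => s) :=
  ⟨fun _ => ⟨hts, hsT⟩, fun _ _ _ _ h => h⟩

lemma stopNonempty {t : ℕ} (ht : t ≤ T) :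
    Nonempty {τ : (ℕ → Ω₁) → ℕ // IsStopAt T t τ} :=
  ⟨⟨fun _ => T, stop_const T ht le_rfl⟩⟩

lemma fstop_agree (hf : AdaptedProc T f) {t : ℕ} {τ : (ℕ → Ω₁) → ℕ}
    (hτ : IsStopAt T t τ) (ω ω' : ℕ → Ω₁) (h : ∀ j, j < T → ω j = ω' j) :
    f (τ ω) ω = f (τ ω') ω' := by
  have hττ : τ ω' = τ ω :=
    hτ.2 (τ ω) ω ω' (fun j hj => h j (lt_of_lt_of_le hj (hτ.1 ω).2)) rfl
  rw [hττ]
  exact hf (τ ω) (hτ.1 ω).2 ω ω' (fun j hj => h j (lt_of_lt_of_le hj (hτ.1 ω).2))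

/-- lower bound function -/
noncomputable def lbf (T : ℕ) (f : ℕ → (ℕ → Ω₁) → ℝ) : (ℕ → Ω₁) → ℝ :=
  fun ω => (Finset.range (T+1)).inf' (by simp) (fun s => f s ω)

lemma X_bddBelow (hR : GoodKernels T R) {t : ℕ} (ω : ℕ → Ω₁) :
    BddBelow (Set.range fun τ : {τ : (ℕ → Ω₁) → ℕ // IsStopAt T t τ} =>
      NE T R t (fun ω' => f (τ.1 ω') ω') ω) := by
  refine ⟨NE T R t (lbf T f) ω, ?_⟩
  rintro y ⟨τ, rfl⟩
  refine NE_mono T R hR t _ _ (fun ω' => ?_) ω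
  exact Finset.inf'_le _ (Finset.mem_range.2 (Nat.lt_succ_of_le (τ.2.1 ω').2))

lemma X_le_NE (hR : GoodKernels T R) {t : ℕ} {τ : (ℕ → Ω₁) → ℕ}
    (hτ : IsStopAt T t τ) (ω : ℕ → Ω₁) :
    upValue T R f t ω ≤ NE T R t (fun ω' => f (τ ω') ω') ω :=
  ciInf_le (X_bddBelow hR ω) ⟨τ, hτ⟩

lemma le_X (ht : t ≤ T) {c : ℝ} (ω : ℕ → Ω₁)
    (h : ∀ τ : (ℕ → Ω₁) → ℕ, IsStopAt T t τ → c ≤ NE T R t (fun ω' => f (τ ω') ω') ω) :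
    c ≤ upValue T R f t ω := by
  haveI := stopNonempty (T := T) (Ω₁ := Ω₁) ht
  exact le_ciInf (fun τ => h τ.1 τ.2)

lemma X_agree (hR : GoodKernels T R) (hf : AdaptedProc T f) {t : ℕ}
    (ω ω' : ℕ → Ω₁) (h : ∀ j, j < t → ω j = ω' j) :
    upValue T R f t ω = upValue T R f t ω' := by
  refine iInf_congr (fun τ => ?_)
  exact NE_agree T R hR t _ (fun η η' hη => fstop_agree hf τ.2 η η' hη) ω ω' h

lemma X_T (hR : GoodKernels T R) (hf : AdaptedProc T f) (ω : ℕ → Ω₁) :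
    upValue T R f T ω = f T ω := by
  have h1 : ∀ τ : {τ : (ℕ → Ω₁) → ℕ // IsStopAt T T τ},
      NE T R T (fun ω' => f (τ.1 ω') ω') ω = f T ω := by
    intro τ
    rw [NE_of_le _ _ _ le_rfl]
    have : τ.1 ω = T := le_antisymm (τ.2.1 ω).2 (τ.2.1 ω).1
    rw [this]
  haveI := stopNonempty (T := T) (Ω₁ := Ω₁) (le_refl T)
  rw [upValue, iInf_congr h1, ciInf_const]

lemma X_le_f (hR : GoodKernels T R) (hf : AdaptedProc T f) {t : ℕ} (ht : t ≤ T)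
    (ω : ℕ → Ω₁) : upValue T R f t ω ≤ f t ω := by
  have := X_le_NE (f := f) hR (stop_const (t := t) t le_rfl ht) ω
  rwa [NE_const T R hR t _ ω (f t ω)
    (fun ω' hω' => hf t ht ω' ω hω')] at this

end valueproc
section bellman

variable {Ω₁ : Type*} [Fintype Ω₁] [Nonempty Ω₁] {T : ℕ}
  {R : ℕ → (ℕ → Ω₁) → Set (Ω₁ → ℝ)} {f : ℕ → (ℕ → Ω₁) → ℝ}

lemma bellman (hR : GoodKernels T R) (hf : AdaptedProc T f) {t : ℕ} (ht : t < T)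
    (ω : ℕ → Ω₁) :
    upValue T R f t ω = min (f t ω)
      (sSup ((fun P : Ω₁ → ℝ =>
        ∑ x : Ω₁, P x * upValue T R f (t+1) (Function.update ω t x)) '' R t ω)) := by
  obtain ⟨hRne, hRP, hRpast⟩ := hR t ht ω
  refine le_antisymm (le_min (X_le_f hR hf ht.le ω) ?_) ?_
  · -- X t ≤ one-step of X (t+1), via ε-optimal stopping times pasted together
    refine le_of_forall_pos_le_add (fun ε hε => ?_)
    have hex : ∀ x : Ω₁, ∃ τ : {τ : (ℕ → Ω₁) → ℕ // IsStopAt T (t+1) τ},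
        NE T R (t+1) (fun ω' => f (τ.1 ω') ω') (Function.update ω t x)
          < upValue T R f (t+1) (Function.update ω t x) + ε := by
      intro x
      haveI := stopNonempty (T := T) (Ω₁ := Ω₁) (t := t + 1) ht
      exact exists_lt_of_ciInf_lt (lt_add_of_pos_right _ hε)
    choose σ hσ using hex
    set τ : (ℕ → Ω₁) → ℕ := fun ω' => (σ (ω' t)).1 ω' with hτdef
    have hτ : IsStopAt T t τ := by
      constructor
      · intro ω'; exact ⟨le_trans (Nat.le_succ t) ((σ (ω' t)).2.1 ω').1, ((σ (ω' t)).2.1 ω').2⟩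
      · intro s ω₁ ω₂ hagree hs
        have hts : t < s := lt_of_lt_of_le (Nat.lt_succ_self t) (hs ▸ ((σ (ω₁ t)).2.1 ω₁).1)
        have hx : ω₂ t = ω₁ t := (hagree t hts).symm
        show (σ (ω₂ t)).1 ω₂ = s
        rw [hx]
        exact (σ (ω₁ t)).2.2 s ω₁ ω₂ hagree hs
    refine le_trans (X_le_NE hR hτ ω) ?_
    rw [NE_of_lt _ _ _ ht]
    refine csSup_le (hRne.image _) ?_
    rintro y ⟨P, hP, rfl⟩
    obtain ⟨hPnn, hPsum⟩ := hRP P hP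
    have hkey : ∀ x : Ω₁, NE T R (t+1) (fun ω' => f (τ ω') ω') (Function.update ω t x)
        ≤ upValue T R f (t+1) (Function.update ω t x) + ε := by
      intro x
      have : NE T R (t+1) (fun ω' => f (τ ω') ω') (Function.update ω t x)
          = NE T R (t+1) (fun ω' => f ((σ x).1 ω') ω') (Function.update ω t x) := by
        refine NE_congr T R (t+1) _ _ _ (fun ω' hω' => ?_)
        have hxt : ω' t = x := by
          have := hω' t (Nat.lt_succ_self t)
          rwa [Function.update_self] at this
        simp only [hτdef, hxt]
      rw [this]
      exact (hσ x).le
    calc ∑ x : Ω₁, P x * NE T R (t+1) (fun ω' => f (τ ω') ω') (Function.update ω t x)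
        ≤ ∑ x : Ω₁, P x * (upValue T R f (t+1) (Function.update ω t x) + ε) :=
          Finset.sum_le_sum (fun x _ => mul_le_mul_of_nonneg_left (hkey x) (hPnn x))
      _ = (∑ x : Ω₁, P x * upValue T R f (t+1) (Function.update ω t x)) + ε := by
          simp only [mul_add, Finset.sum_add_distrib, ← Finset.sum_mul, hPsum, one_mul]
      _ ≤ sSup _ + ε := add_le_add_left (le_csSup (bddAbove_img T R hR ht ω _) ⟨P, hP, rfl⟩) _
  · -- min ≤ X t
    refine le_X ht.le ω (fun τ hτ => ?_)
    by_cases hcase : τ ω = t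
    · refine le_trans (min_le_left _ _) ?_
      rw [NE_const T R hR t _ ω (f t ω) (fun ω' hω' => ?_)]
      have : τ ω' = t := hτ.2 t ω ω' (fun j hj => (hω' j hj).symm) hcase
      rw [this]
      exact hf t ht.le ω' ω hω'
    · refine le_trans (min_le_right _ _) ?_
      have hge : ∀ ω', (∀ j, j < t → ω' j = ω j) → t + 1 ≤ τ ω' := by
        intro ω' hω'
        rcases Nat.lt_or_ge (τ ω') (t+1) with h | h
        · exfalso
          have : τ ω' = t := le_antisymm (Nat.lt_succ_iff.1 h) (hτ.1 ω').1
          exact hcase (hτ.2 t ω' ω hω' this)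
        · exact h
      rw [NE_of_lt _ _ _ ht]
      refine csSup_le (hRne.image _) ?_
      rintro y ⟨P, hP, rfl⟩
      obtain ⟨hPnn, hPsum⟩ := hRP P hP
      -- the truncated stopping time max τ (t+1)
      set τ'' : (ℕ → Ω₁) → ℕ := fun ω' => max (τ ω') (t+1) with hτ''def
      have hτ'' : IsStopAt T (t+1) τ'' := by
        constructor
        · intro ω'; exact ⟨le_max_right _ _, max_le (hτ.1 ω').2 ht⟩
        · intro s ω₁ ω₂ hagree hs
          rcases Nat.lt_or_ge (τ ω₁) (t+1) with h | h
          · have hτ₁ : τ ω₁ = t := le_antisymm (Nat.lt_succ_iff.1 h) (hτ.1 ω₁).1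
            have hs' : s = t + 1 := by simp [hτ''def, hτ₁] at hs; omega
            have : τ ω₂ = t := hτ.2 t ω₁ ω₂ (fun j hj => hagree j (by omega)) hτ₁
            simp [hτ''def, this, hs']
          · have hs' : s = τ ω₁ := by simp only [hτ''def] at hs; omega
            have : τ ω₂ = s := hτ.2 s ω₁ ω₂ hagree hs'.symm
            simp only [hτ''def, this]; omega
      have hkey : ∀ x : Ω₁, upValue T R f (t+1) (Function.update ω t x)
          ≤ NE T R (t+1) (fun ω' => f (τ ω') ω') (Function.update ω t x) := by
        intro x
        have heq : NE T R (t+1) (fun ω' => f (τ'' ω') ω') (Function.update ω t x)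
            = NE T R (t+1) (fun ω' => f (τ ω') ω') (Function.update ω t x) := by
          refine NE_congr T R (t+1) _ _ _ (fun ω' hω' => ?_)
          have hω't : ∀ j, j < t → ω' j = ω j := by
            intro j hj
            have := hω' j (by omega)
            rwa [Function.update_of_ne (by omega)] at this
          have : τ'' ω' = τ ω' := max_eq_left (hge ω' hω't)
          rw [this]
        rw [← heq]
        exact X_le_NE hR hτ'' _
      refine le_trans ?_ (le_csSup (bddAbove_img T R hR ht ω _) ⟨P, hP, rfl⟩)
      exact Finset.sum_le_sum (fun x _ => mul_le_mul_of_nonneg_left (hkey x) (hPnn x))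

end bellman
section hitting

variable {Ω₁ : Type*} [Fintype Ω₁] [Nonempty Ω₁] {T : ℕ}
  {R : ℕ → (ℕ → Ω₁) → Set (Ω₁ → ℝ)} {f : ℕ → (ℕ → Ω₁) → ℝ}

/-- first hitting time of `{f = X}` after `t`. -/
noncomputable def hit (T : ℕ) (R : ℕ → (ℕ → Ω₁) → Set (Ω₁ → ℝ))
    (f : ℕ → (ℕ → Ω₁) → ℝ) (t : ℕ) (ω : ℕ → Ω₁) : ℕ :=
  sInf {s : ℕ | t ≤ s ∧ f s ω = upValue T R f s ω}

lemma hitset_ne (hR : GoodKernels T R) (hf : AdaptedProc T f) {t : ℕ} (ht : t ≤ T)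
    (ω : ℕ → Ω₁) : T ∈ {s : ℕ | t ≤ s ∧ f s ω = upValue T R f s ω} :=
  ⟨ht, (X_T hR hf ω).symm⟩

lemma hit_mem (hR : GoodKernels T R) (hf : AdaptedProc T f) {t : ℕ} (ht : t ≤ T)
    (ω : ℕ → Ω₁) :
    t ≤ hit T R f t ω ∧ f (hit T R f t ω) ω = upValue T R f (hit T R f t ω) ω :=
  Nat.sInf_mem ⟨T, hitset_ne hR hf ht ω⟩

lemma hit_le_T (hR : GoodKernels T R) (hf : AdaptedProc T f) {t : ℕ} (ht : t ≤ T)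
    (ω : ℕ → Ω₁) : hit T R f t ω ≤ T :=
  Nat.sInf_le (hitset_ne hR hf ht ω)

lemma hit_stop (hR : GoodKernels T R) (hf : AdaptedProc T f) {t : ℕ} (ht : t ≤ T) :
    IsStopAt T t (hit T R f t) := by
  constructor
  · exact fun ω => ⟨(hit_mem hR hf ht ω).1, hit_le_T hR hf ht ω⟩
  · intro s ω ω' hagree hs
    have hsT : s ≤ T := hs ▸ hit_le_T hR hf ht ω
    have hmem : s ∈ {u : ℕ | t ≤ u ∧ f u ω = upValue T R f u ω} := by
      rw [← hs]; exact ⟨(hit_mem hR hf ht ω).1, (hit_mem hR hf ht ω).2⟩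
    have htrans : ∀ u, u ≤ s →
        (u ∈ {u : ℕ | t ≤ u ∧ f u ω = upValue T R f u ω} ↔
         u ∈ {u : ℕ | t ≤ u ∧ f u ω' = upValue T R f u ω'}) := by
      intro u hu
      have hf' : f u ω = f u ω' := hf u (le_trans hu hsT) ω ω'
        (fun j hj => hagree j (by omega))
      have hX : upValue T R f u ω = upValue T R f u ω' :=
        X_agree hR hf ω ω' (fun j hj => hagree j (by omega))
      simp only [Set.mem_setOf_eq, hf', hX]
    have hmem' : s ∈ {u : ℕ | t ≤ u ∧ f u ω' = upValue T R f u ω'} :=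
      (htrans s le_rfl).1 hmem
    refine le_antisymm (Nat.sInf_le hmem') ?_
    by_contra hlt
    push_neg at hlt
    have hmemInf : hit T R f t ω' ∈ {u : ℕ | t ≤ u ∧ f u ω' = upValue T R f u ω'} :=
      Nat.sInf_mem ⟨s, hmem'⟩
    have : hit T R f t ω' ∈ {u : ℕ | t ≤ u ∧ f u ω = upValue T R f u ω} :=
      (htrans _ hlt.le).2 hmemInf
    have h2 : hit T R f t ω ≤ hit T R f t ω' := Nat.sInf_le this
    omega

lemma hit_opt (hR : GoodKernels T R) (hf : AdaptedProc T f) {t : ℕ} (ht : t ≤ T) :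
    ∀ ω, upValue T R f t ω = NE T R t (fun ω' => f (hit T R f t ω') ω') ω := by
  intro ω
  rcases eq_or_lt_of_le ht with rfl | htlt
  · -- t = T
    have hh : ∀ ω' : ℕ → Ω₁, hit t R f t ω' = t := by
      intro ω'
      exact le_antisymm (hit_le_T hR hf le_rfl ω') (hit_mem hR hf le_rfl ω').1
    rw [NE_of_le _ _ _ le_rfl, hh ω, X_T hR hf ω]
  · by_cases hc : f t ω = upValue T R f t ω
    · rw [NE_const T R hR t _ ω (f t ω) (fun ω' hω' => ?_), hc]
      have hfX : t ∈ {s : ℕ | t ≤ s ∧ f s ω' = upValue T R f s ω'} := by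
        refine ⟨le_rfl, ?_⟩
        rw [hf t ht ω' ω hω', X_agree hR hf ω' ω hω']
        exact hc
      have : hit T R f t ω' = t :=
        le_antisymm (Nat.sInf_le hfX) (hit_mem hR hf ht ω').1
      rw [this]
      exact hf t ht ω' ω hω'
    · -- not hit at t : X t = one-step of X(t+1), and hit t = hit (t+1) on the subtree
      have hsame : ∀ ω', (∀ j, j < t → ω' j = ω j) → hit T R f t ω' = hit T R f (t+1) ω' := by
        intro ω' hω'
        have hnt : t ∉ {s : ℕ | t ≤ s ∧ f s ω' = upValue T R f s ω'} := by
          intro hmem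
          apply hc
          rw [← hf t ht ω' ω hω', ← X_agree hR hf ω' ω hω']
          exact hmem.2
        have hseteq : {s : ℕ | t ≤ s ∧ f s ω' = upValue T R f s ω'}
            = {s : ℕ | t + 1 ≤ s ∧ f s ω' = upValue T R f s ω'} := by
          ext s
          simp only [Set.mem_setOf_eq]
          constructor
          · rintro ⟨h1, h2⟩
            rcases eq_or_lt_of_le h1 with rfl | h1'
            · exact absurd ⟨le_rfl, h2⟩ hnt
            · exact ⟨h1', h2⟩
          · rintro ⟨h1, h2⟩; exact ⟨by omega, h2⟩
        simp only [hit, hseteq]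
      have hXt : upValue T R f t ω
          = sSup ((fun P : Ω₁ → ℝ =>
            ∑ x : Ω₁, P x * upValue T R f (t+1) (Function.update ω t x)) '' R t ω) := by
        have hb := bellman hR hf htlt ω
        rcases min_cases (f t ω) (sSup ((fun P : Ω₁ → ℝ =>
            ∑ x : Ω₁, P x * upValue T R f (t+1) (Function.update ω t x)) '' R t ω)) with
          ⟨heq, _⟩ | ⟨heq, _⟩
        · rw [heq] at hb; exact absurd hb.symm hc
        · rw [heq] at hb; exact hb
      rw [hXt, NE_of_lt _ _ _ htlt]
      congr 1
      apply Set.image_congr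
      intro P _
      refine Finset.sum_congr rfl (fun x _ => ?_)
      congr 1
      have h1 : NE T R (t+1) (fun ω' => f (hit T R f t ω') ω') (Function.update ω t x)
          = NE T R (t+1) (fun ω' => f (hit T R f (t+1) ω') ω') (Function.update ω t x) := by
        refine NE_congr T R (t+1) _ _ _ (fun ω' hω' => ?_)
        rw [hsame ω' (fun j hj => by
          have := hω' j (by omega)
          rwa [Function.update_of_ne (by omega)] at this)]
      rw [h1]
      exact hit_opt hR hf (by omega : t + 1 ≤ T) (Function.update ω t x)
termination_by T - t
decreasing_by omega

end hitting
lemma hit_zero_eq {Ω₁ : Type*} [Fintype Ω₁] [Nonempty Ω₁] (T : ℕ)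
    (R : ℕ → (ℕ → Ω₁) → Set (Ω₁ → ℝ)) (f : ℕ → (ℕ → Ω₁) → ℝ) (ω : ℕ → Ω₁) :
    sInf {t : ℕ | f t ω = upValue T R f t ω} = hit T R f 0 ω := by
  unfold hit
  congr 1
  ext s
  simp
/-- Optimality of the first hitting time `τ* = inf {t : f t = X t}` for the adverse
optimal stopping problem: `X 0 = 𝓔[f_{τ*}] = inf_τ 𝓔[f_τ]`. -/
theorem stmt10 {Ω₁ : Type*} [Fintype Ω₁] [Nonempty Ω₁] (T : ℕ)
    (R : ℕ → (ℕ → Ω₁) → Set (Ω₁ → ℝ)) (f : ℕ → (ℕ → Ω₁) → ℝ)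
    (hR : GoodKernels T R) (hf : AdaptedProc T f) :
    IsStopAt T 0 (fun ω => sInf {t : ℕ | f t ω = upValue T R f t ω}) ∧
    (∀ ω, upValue T R f 0 ω =
      NE T R 0 (fun ω' => f (sInf {t : ℕ | f t ω' = upValue T R f t ω'}) ω') ω) ∧
    (∀ ω, upValue T R f 0 ω =
      ⨅ τ : {τ : (ℕ → Ω₁) → ℕ // IsStopAt T 0 τ},
        NE T R 0 (fun ω' => f (τ.1 ω') ω') ω) := by
  have h0 : (fun ω : ℕ → Ω₁ => sInf {t : ℕ | f t ω = upValue T R f t ω}) = hit T R f 0 := by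
    funext ω; exact hit_zero_eq T R f ω
  refine ⟨h0 ▸ hit_stop hR hf (Nat.zero_le T), fun ω => ?_, fun ω => rfl⟩
  have h1 : (fun ω' : ℕ → Ω₁ => f (sInf {t : ℕ | f t ω' = upValue T R f t ω'}) ω')
      = fun ω' => f (hit T R f 0 ω') ω' := by
    funext ω'; rw [hit_zero_eq]
  rw [h1]
  exact hit_opt hR hf (Nat.zero_le T) ω
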